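/- Let H be a complex Hilbert space, let A : H → H be a bounded self-adjoint operator with ⟨f, A f⟩ ≥ 0 for all f ∈ H, let Y : ℝ → B(H) be a map such that Y(k) is unitary for every k ∈ ℝ and such that k ↦ ⟨Y(k)h, A(Y(k)f)⟩ is measurable for all f, h ∈ H, and let g : ℝ → [0,∞) be Lebesgue integrable with ∫_ℝ g(k) dk = 1. Suppose B : H → H is a bounded operator satisfying ⟨h, B f⟩ = ∫_ℝ ⟨Y(k)h, A(Y(k)f)⟩ g(k) dk for all f, h ∈ H. Then for every n ∈ ℕ and every orthonormal family (e_1, …, e_n) in H one has ∑_{j=1}^{n} ⟨e_j, B e_j⟩ ≤ sup { ∑_{j=1}^{n} ⟨f_j, A f_j⟩ : (f_1, …, f_n) an orthonormal family in H }. -/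

import Mathlib

open MeasureTheory

theorem majorisation_by_unitary_average
    {H : Type*} [NormedAddCommGroup H] [InnerProductSpace ℂ H] [CompleteSpace H]
    (A : H →L[ℂ] H)
    (hA_sa : ∀ f h : H, (inner ℂ (A f) h : ℂ) = inner ℂ f (A h))
    (hA_pos : ∀ f : H, 0 ≤ (inner ℂ f (A f) : ℂ).re)
    (Y : ℝ → H →L[ℂ] H)
    (hY_isometry : ∀ (k : ℝ) (f h : H), (inner ℂ (Y k f) (Y k h) : ℂ) = inner ℂ f h)
    (hY_surj : ∀ k : ℝ, Function.Surjective (Y k))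
    (hmeas : ∀ f h : H, Measurable fun k : ℝ => (inner ℂ (Y k h) (A (Y k f)) : ℂ))
    (g : ℝ → ℝ) (hg_nonneg : ∀ k, 0 ≤ g k) (hg_int : Integrable g)
    (hg_one : (∫ k : ℝ, g k) = 1)
    (B : H →L[ℂ] H)
    (hB : ∀ f h : H, (inner ℂ h (B f) : ℂ) = ∫ k : ℝ, (inner ℂ (Y k h) (A (Y k f)) : ℂ) * (g k : ℂ))
    (n : ℕ) (e : Fin n → H) (he : Orthonormal ℂ e) :
    ∑ j, (inner ℂ (e j) (B (e j)) : ℂ).re ≤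
      sSup {r : ℝ | ∃ f : Fin n → H, Orthonormal ℂ f ∧
        r = ∑ j, (inner ℂ (f j) (A (f j)) : ℂ).re} := by
  classical
  set T : Set ℝ := {r : ℝ | ∃ f : Fin n → H, Orthonormal ℂ f ∧
      r = ∑ j, (inner ℂ (f j) (A (f j)) : ℂ).re} with hT
  set S : ℝ := sSup T with hSdef
  have hquad : ∀ f : H, ‖f‖ = 1 → (inner ℂ f (A f) : ℂ).re ≤ ‖A‖ := by
    intro f hf
    calc (inner ℂ f (A f) : ℂ).re ≤ ‖(inner ℂ f (A f) : ℂ)‖ := Complex.re_le_norm _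
      _ ≤ ‖f‖ * ‖A f‖ := norm_inner_le_norm _ _
      _ ≤ ‖f‖ * (‖A‖ * ‖f‖) := by gcongr; exact A.le_opNorm f
      _ = ‖A‖ := by rw [hf]; ring
  have hbdd : BddAbove T := by
    refine ⟨n * ‖A‖, ?_⟩
    rintro r ⟨f, hf, rfl⟩
    calc ∑ j, (inner ℂ (f j) (A (f j)) : ℂ).re ≤ ∑ _j : Fin n, ‖A‖ :=
          Finset.sum_le_sum fun j _ => hquad _ (hf.1 j)
      _ = n * ‖A‖ := by simp [Finset.sum_const]
  have hYnorm : ∀ (k : ℝ) (f : H), ‖Y k f‖ = ‖f‖ := by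
    intro k f
    have h1 : (‖Y k f‖ : ℝ) ^ 2 = ‖f‖ ^ 2 := by
      have := hY_isometry k f f
      have h2 := congrArg Complex.re this
      rwa [← inner_self_eq_norm_sq (𝕜 := ℂ), ← inner_self_eq_norm_sq (𝕜 := ℂ)]
    nlinarith [norm_nonneg (Y k f), norm_nonneg f]
  have hYe : ∀ k : ℝ, Orthonormal ℂ (fun j => Y k (e j)) := by
    intro k
    rw [orthonormal_iff_ite] at he ⊢
    intro i j
    rw [hY_isometry]; exact he i j
  have hmemS : ∀ k : ℝ, (∑ j, (inner ℂ (Y k (e j)) (A (Y k (e j))) : ℂ).re) ≤ S :=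
    fun k => le_csSup hbdd ⟨fun j => Y k (e j), hYe k, rfl⟩
  -- integrability of the complex integrands
  have hgC : AEStronglyMeasurable (fun k : ℝ => (g k : ℂ)) volume :=
    Complex.continuous_ofReal.comp_aestronglyMeasurable hg_int.aestronglyMeasurable
  have hint : ∀ j : Fin n,
      Integrable (fun k : ℝ => (inner ℂ (Y k (e j)) (A (Y k (e j))) : ℂ) * (g k : ℂ)) := by
    intro j
    refine (hg_int.const_mul ‖A‖).mono
      (((hmeas (e j) (e j)).aestronglyMeasurable).mul hgC) ?_
    filter_upwards with k
    have h1 : ‖(inner ℂ (Y k (e j)) (A (Y k (e j))) : ℂ)‖ ≤ ‖A‖ := by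
      calc ‖(inner ℂ (Y k (e j)) (A (Y k (e j))) : ℂ)‖
          ≤ ‖Y k (e j)‖ * ‖A (Y k (e j))‖ := norm_inner_le_norm _ _
        _ ≤ ‖Y k (e j)‖ * (‖A‖ * ‖Y k (e j)‖) := by gcongr; exact A.le_opNorm _
        _ = ‖A‖ := by rw [hYnorm, he.1 j]; ring
    have hg := hg_nonneg k
    rw [norm_mul, Complex.norm_real, Real.norm_eq_abs, abs_of_nonneg hg,
      Real.norm_eq_abs, abs_of_nonneg (by positivity)]
    exact mul_le_mul_of_nonneg_right h1 hg
  -- real integrands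
  set ψ : Fin n → ℝ → ℝ :=
    fun j k => (inner ℂ (Y k (e j)) (A (Y k (e j))) : ℂ).re * g k with hψ
  have hψint : ∀ j, Integrable (ψ j) := by
    intro j
    have := (hint j).re
    refine this.congr (Filter.Eventually.of_forall fun k => ?_)
    simp [ψ, Complex.mul_re]
  have key : ∀ j, (inner ℂ (e j) (B (e j)) : ℂ).re = ∫ k : ℝ, ψ j k := by
    intro j
    rw [hB]
    rw [← RCLike.re_to_complex, ← integral_re (hint j)]
    refine integral_congr_ae (Filter.Eventually.of_forall fun k => ?_)
    simp [ψ, Complex.mul_re]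
  calc ∑ j, (inner ℂ (e j) (B (e j)) : ℂ).re
      = ∑ j, ∫ k : ℝ, ψ j k := by simp only [key]
    _ = ∫ k : ℝ, ∑ j, ψ j k := by
        rw [← integral_finset_sum _ fun j _ => hψint j]
    _ ≤ ∫ k : ℝ, S * g k := by
        refine integral_mono (integrable_finset_sum _ fun j _ => hψint j)
          (hg_int.const_mul S) fun k => ?_
        have : (∑ j, ψ j k) = (∑ j, (inner ℂ (Y k (e j)) (A (Y k (e j))) : ℂ).re) * g k := by
          rw [Finset.sum_mul]
        rw [this]
        exact mul_le_mul_of_nonneg_right (hmemS k) (hg_nonneg k)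
    _ = S := by rw [integral_const_mul, hg_one, mul_one]
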